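/- Let 𝒜 be an infinite family of pairwise almost disjoint infinite-dimensional subspaces of V. Then the set 𝒟 of nonprincipal ultrafilters on V that contain every subspace of V of finite codimension and contain V \ S[n] for every S ∈ 𝒜 and n < ω is nonempty. -/

import Mathlib

open Set

/-- `V = ⊕_{n<ω} 𝔽₂`, realized as finitely supported functions `ℕ →₀ 𝔽₂`. -/
abbrev V : Type := ℕ →₀ ZMod 2

/-- The basis vectors `x_n` of `V`. -/
noncomputable def xb (n : ℕ) : V := Finsupp.single n 1

/-- `S[n] = (⊕_{l<n} 𝔽₂ x_l) + S`. -/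
def brack (S : Submodule (ZMod 2) V) (n : ℕ) : Set V :=
  {v | ∃ w ∈ Submodule.span (ZMod 2) {z : V | ∃ l < n, z = xb l}, ∃ s ∈ S, v = w + s}


lemma add_self_zero {M : Type*} [AddCommGroup M] [Module (ZMod 2) M] (x : M) : x + x = 0 := by
  have h := two_smul (ZMod 2) x
  rw [show (2 : ZMod 2) = 0 from rfl, zero_smul] at h
  exact h.symm

lemma inf_infinite {K W : Submodule (ZMod 2) V} (hK : ((K : Set V)).Infinite)
    (hW : Finite (V ⧸ W)) : ((K ⊓ W : Submodule (ZMod 2) V) : Set V).Infinite := by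
  haveI : Infinite ↥K := hK.to_subtype
  obtain ⟨y, hy⟩ := Finite.exists_infinite_fiber
    (fun x : K => Submodule.Quotient.mk (p := W) (x : V))
  haveI := hy
  obtain ⟨x₀⟩ := (inferInstance : Infinite ↥((fun x : K =>
      Submodule.Quotient.mk (p := W) (x : V)) ⁻¹' {y})).nonempty
  have hx₀ : Submodule.Quotient.mk (p := W) ((x₀ : K) : V) = y := x₀.2
  set f : ↥((fun x : K => Submodule.Quotient.mk (p := W) (x : V)) ⁻¹' {y}) →
      ↥(K ⊓ W : Submodule (ZMod 2) V) := fun z =>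
    ⟨((z : K) : V) + ((x₀ : K) : V), by
      constructor
      · exact K.add_mem (z : K).2 (x₀ : K).2
      · have hz : Submodule.Quotient.mk (p := W) ((z : K) : V) = y := z.2
        have : Submodule.Quotient.mk (p := W) (((z : K) : V) + ((x₀ : K) : V)) = 0 := by
          rw [Submodule.Quotient.mk_add, hz, hx₀, add_self_zero]
        exact (Submodule.Quotient.mk_eq_zero W).mp this⟩ with hf
  have hinj : Function.Injective f := by
    intro a b hab
    have : ((a : K) : V) + ((x₀ : K) : V) = ((b : K) : V) + ((x₀ : K) : V) :=
      congrArg Subtype.val hab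
    exact Subtype.ext (Subtype.ext (add_right_cancel this))
  exact Set.infinite_coe_iff.mp (Infinite.of_injective f hinj)

lemma brack_inter_finite {S T : Submodule (ZMod 2) V}
    (hfin : ((S : Set V) ∩ (T : Set V)).Finite) (n : ℕ) :
    ((T : Set V) ∩ brack S n).Finite := by
  set gens : Set V := {z : V | ∃ l < n, z = xb l} with hgens
  have hgfin : gens.Finite := by
    have : gens ⊆ xb '' (Set.Iio n) := by
      rintro z ⟨l, hl, hz⟩; exact ⟨l, hl, hz.symm⟩
    exact ((Set.finite_Iio n).image _).subset this
  have hF : ((Submodule.span (ZMod 2) gens : Submodule (ZMod 2) V) : Set V).Finite := by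
    haveI := Module.Finite.span_of_finite (ZMod 2) hgfin
    haveI : Finite ↥(Submodule.span (ZMod 2) gens) := Module.finite_of_finite (ZMod 2)
    exact Set.toFinite _
  have hsub : (T : Set V) ∩ brack S n ⊆
      ⋃ w ∈ ((Submodule.span (ZMod 2) gens : Submodule (ZMod 2) V) : Set V),
        ((T : Set V) ∩ {v | ∃ s ∈ S, v = w + s}) := by
    rintro v ⟨hvT, w, hw, s, hs, rfl⟩
    exact Set.mem_biUnion hw ⟨hvT, s, hs, rfl⟩
  refine Set.Finite.subset (Set.Finite.biUnion hF ?_) hsub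
  intro w _
  by_cases hne : ((T : Set V) ∩ {v | ∃ s ∈ S, v = w + s}).Nonempty
  · obtain ⟨v₀, hv₀T, s₀, hs₀, hv₀⟩ := hne
    have hsubs : (T : Set V) ∩ {v | ∃ s ∈ S, v = w + s} ⊆
        (fun u => u + v₀) '' ((S : Set V) ∩ (T : Set V)) := by
      rintro v ⟨hvT, s, hs, rfl⟩
      have h2 : (w + s) + v₀ = s + s₀ := by
        rw [hv₀]
        have : (w + s) + (w + s₀) = (w + w) + (s + s₀) := by abel
        rw [this, add_self_zero, zero_add]
      refine ⟨s + s₀, ⟨S.add_mem hs hs₀, h2 ▸ T.add_mem hvT hv₀T⟩, ?_⟩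
      show (s + s₀) + v₀ = w + s
      rw [hv₀]
      have : (s + s₀) + (w + s₀) = (s₀ + s₀) + (w + s) := by abel
      rw [this, add_self_zero, zero_add]
    exact (hfin.image _).subset hsubs
  · rw [Set.not_nonempty_iff_eq_empty] at hne
    rw [hne]; exact Set.finite_empty


/-- Subclaim 1 (consequence): if `𝒜` is an infinite family of pairwise almost disjoint
infinite-dimensional subspaces of `V`, then the set `𝒟` of nonprincipal ultrafilters on
`V` containing every subspace of finite codimension and every `V \ S[n]` (`S ∈ 𝒜`,
`n < ω`) is nonempty. -/
theorem scrD_nonempty (𝒜 : Set (Submodule (ZMod 2) V)) (hinf : 𝒜.Infinite)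
    (hdim : ∀ S ∈ 𝒜, ¬ Module.Finite (ZMod 2) ↥S)
    (had : ∀ S₁ ∈ 𝒜, ∀ S₂ ∈ 𝒜, S₁ ≠ S₂ → ((S₁ : Set V) ∩ (S₂ : Set V)).Finite) :
    ∃ D : Ultrafilter V,
      (∀ v : V, ({v} : Set V) ∉ D) ∧
      (∀ W : Submodule (ZMod 2) V, Module.Finite (ZMod 2) (V ⧸ W) → (W : Set V) ∈ D) ∧
      (∀ S ∈ 𝒜, ∀ n : ℕ, Set.univ \ brack S n ∈ D) := by
  classical
  set 𝔅 : Set (Set V) := {A | (∃ W : Submodule (ZMod 2) V, Module.Finite (ZMod 2) (V ⧸ W) ∧ A = ↑W) ∨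
      (∃ S ∈ 𝒜, ∃ n : ℕ, A = Set.univ \ brack S n) ∨ Aᶜ.Finite} with h𝔅
  have hFIP : ∀ t, t ⊆ 𝔅 → t.Finite → (⋂₀ t).Nonempty := by
    intro t hts htf
    -- pick T ∈ 𝒜 avoiding all S's used in t
    have hσex : ∀ A : Set V, ∃ S : Submodule (ZMod 2) V,
        (∃ S' ∈ 𝒜, ∃ n : ℕ, A = Set.univ \ brack S' n) →
          (S ∈ 𝒜 ∧ ∃ n : ℕ, A = Set.univ \ brack S n) := by
      intro A
      by_cases h : ∃ S' ∈ 𝒜, ∃ n : ℕ, A = Set.univ \ brack S' n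
      · obtain ⟨S, hS, n, hn⟩ := h
        exact ⟨S, fun _ => ⟨hS, n, hn⟩⟩
      · exact ⟨⊥, fun h' => absurd h' h⟩
    set σ : Set V → Submodule (ZMod 2) V := fun A => (hσex A).choose with hσ
    obtain ⟨T, hT𝒜, hTσ⟩ : ∃ T ∈ 𝒜, T ∉ σ '' t := by
      obtain ⟨T, hT⟩ := (hinf.diff (htf.image σ)).nonempty
      exact ⟨T, hT.1, hT.2⟩
    have hTinf : ((T : Set V)).Infinite := by
      rw [← Set.infinite_coe_iff, ← not_finite_iff_infinite]
      intro h
      exact hdim T hT𝒜 ((Module.finite_iff_finite (R := ZMod 2)).mpr h)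
    -- the finite-codimension submodules
    have hgex : ∀ A : Set V, ∃ W : Submodule (ZMod 2) V, Module.Finite (ZMod 2) (V ⧸ W) ∧
        ((∃ W' : Submodule (ZMod 2) V, Module.Finite (ZMod 2) (V ⧸ W') ∧ A = ↑W') → A = ↑W) := by
      intro A
      by_cases h : ∃ W' : Submodule (ZMod 2) V, Module.Finite (ZMod 2) (V ⧸ W') ∧ A = ↑W'
      · exact ⟨h.choose, h.choose_spec.1, fun _ => h.choose_spec.2⟩
      · refine ⟨⊤, ?_, fun h' => absurd h' h⟩
        haveI : Subsingleton (V ⧸ (⊤ : Submodule (ZMod 2) V)) :=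
          Submodule.Quotient.subsingleton_iff.mpr rfl
        exact Module.Finite.of_surjective (0 : (ZMod 2) →ₗ[ZMod 2] _)
          (fun x => ⟨0, Subsingleton.elim _ _⟩)
    set g : Set V → Submodule (ZMod 2) V := fun A => (hgex A).choose with hg
    have hgfin : ∀ A, Finite (V ⧸ g A) := by
      intro A
      haveI : Module.Finite (ZMod 2) (V ⧸ g A) := (hgex A).choose_spec.1
      exact Module.finite_of_finite (ZMod 2)
    have hgA : ∀ A : Set V,
        (∃ W : Submodule (ZMod 2) V, Module.Finite (ZMod 2) (V ⧸ W) ∧ A = (W : Set V)) →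
        A = (g A : Set V) := fun A h => (hgex A).choose_spec.2 h
    set K : Submodule (ZMod 2) V := T ⊓ ⨅ A ∈ t, g A with hK
    have key : ∀ s : Set (Set V), s.Finite →
        ((T ⊓ ⨅ A ∈ s, g A : Submodule (ZMod 2) V) : Set V).Infinite := by
      intro s hs
      refine Set.Finite.induction_on s hs (by simpa using hTinf) ?_
      rintro a s _ _ ih
      have heq : (T ⊓ ⨅ A ∈ insert a s, g A : Submodule (ZMod 2) V)
          = (T ⊓ ⨅ A ∈ s, g A) ⊓ g a := by
        rw [iInf_insert, inf_comm (g a), ← inf_assoc]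
      rw [heq]
      exact inf_infinite ih (hgfin a)
    have hKinf : ((K : Set V)).Infinite := key t htf
    have hKT : (K : Set V) ⊆ (T : Set V) := fun x hx => hx.1
    have hKg : ∀ A ∈ t, (K : Set V) ⊆ ↑(g A) := by
      intro A hA x hx
      exact (iInf₂_le A hA : (⨅ A ∈ t, g A) ≤ g A) hx.2
    have hD : ∀ A ∈ t, (Aᶜ ∩ (K : Set V)).Finite := by
      intro A hA
      rcases hts hA with h | h | hco
      · refine Set.Finite.subset Set.finite_empty ?_
        rintro x ⟨hxc, hxK⟩
        exact absurd ((hgA A h) ▸ hKg A hA hxK) hxc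
      · obtain ⟨hS'𝒜, n', hAn'⟩ := (hσex A).choose_spec h
        have hne : σ A ≠ T := fun he => hTσ ⟨A, hA, he⟩
        have hfin := brack_inter_finite (had (σ A) hS'𝒜 T hT𝒜 hne) n'
        refine Set.Finite.subset hfin ?_
        rintro x ⟨hxc, hxK⟩
        refine ⟨hKT hxK, ?_⟩
        rw [hAn'] at hxc
        have hx : x ∈ brack ((hσex A).choose) n' := by simpa using hxc
        exact hx
      · exact hco.subset (Set.inter_subset_left)
    have hbad : (⋃ A ∈ t, (Aᶜ ∩ (K : Set V))).Finite := htf.biUnion hD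
    obtain ⟨v, hvK, hv⟩ := (hKinf.diff hbad).nonempty
    refine ⟨v, Set.mem_sInter.mpr fun A hA => ?_⟩
    by_contra hvA
    exact hv (Set.mem_biUnion hA ⟨hvA, hvK⟩)
  haveI : (Filter.generate 𝔅).NeBot := Filter.generate_neBot_iff.mpr hFIP
  refine ⟨Ultrafilter.of (Filter.generate 𝔅), ?_, ?_, ?_⟩
  · intro v
    have h1 : ({v} : Set V)ᶜ ∈ 𝔅 := Or.inr (Or.inr (by rw [compl_compl]; exact Set.finite_singleton v))
    have h2 : ({v} : Set V)ᶜ ∈ Ultrafilter.of (Filter.generate 𝔅) :=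
      Ultrafilter.of_le _ (Filter.mem_generate_of_mem h1)
    exact Ultrafilter.compl_mem_iff_notMem.mp h2
  · intro W hW
    exact Ultrafilter.of_le _ (Filter.mem_generate_of_mem (Or.inl ⟨W, hW, rfl⟩))
  · intro S hS n
    exact Ultrafilter.of_le _ (Filter.mem_generate_of_mem (Or.inr (Or.inl ⟨S, hS, n, rfl⟩)))
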